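/- Properties of the extrapolated potential, part (ii): assume the kernel matrix K = (exp(−c_{ij}/2))_{i,j} is positive definite. For every f ∈ ℝ^d: (f^E)^E = f^E, Ω_C^*(f^E) = Ω_C^*(f), and g-softmax(f^E) = g-softmax(f). -/

import Mathlib

open Finset Real Filter

noncomputable section

/-- The probability simplex in `ℝ^d`. -/
def simplexS (d : ℕ) : Set (Fin d → ℝ) := stdSimplex ℝ (Fin d)


open scoped Classical

/-- `Φ_C(α,f) = Σ_{i,j} α_i α_j exp(-(f_i + f_j + c_{ij})/2)`. -/
def Phi {d : ℕ} (C : Matrix (Fin d) (Fin d) ℝ) (α f : Fin d → ℝ) : ℝ :=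
  ∑ i, ∑ j, α i * α j * Real.exp (-(f i + f j + C i j) / 2)

/-- The geometric log-sum-exp `Ω_C^*(f) = -log min_{α ∈ △^d} Φ_C(α, f)`. -/
def OmegaStar {d : ℕ} (C : Matrix (Fin d) (Fin d) ℝ) (f : Fin d → ℝ) : ℝ :=
  -Real.log (sInf ((fun α => Phi C α f) '' simplexS d))

/-- The geometric softmax: the (unique, when the kernel is positive definite) minimizer of
`Φ_C(·, f)` over the simplex. -/
def gsoftmax {d : ℕ} (C : Matrix (Fin d) (Fin d) ℝ) (f : Fin d → ℝ) : Fin d → ℝ :=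
  if h : ∃ α ∈ simplexS d, IsMinOn (fun β => Phi C β f) (simplexS d) α
  then h.choose else fun _ => 0

/-- The soft C-transform `T(f,α)_i = -2 log Σ_j α_j exp((f_j - c_{ij})/2)`. -/
def Tsoft {d : ℕ} (C : Matrix (Fin d) (Fin d) ℝ) (f α : Fin d → ℝ) : Fin d → ℝ :=
  fun i => -2 * Real.log (∑ j, α j * Real.exp ((f j - C i j) / 2))

/-- `f` is the symmetric Sinkhorn potential of `α`: `-f = T(-f, α)`. -/
def IsSinkhornPotential {d : ℕ} (C : Matrix (Fin d) (Fin d) ℝ) (α f : Fin d → ℝ) : Prop :=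
  -f = Tsoft C (-f) α

/-- The symmetric Sinkhorn potential `∇Ω(α)`: the (unique, when the kernel is positive
definite) `f` with `-f = T(-f, α)`. -/
def gradOmega {d : ℕ} (C : Matrix (Fin d) (Fin d) ℝ) (α : Fin d → ℝ) : Fin d → ℝ :=
  if h : ∃ f : Fin d → ℝ, IsSinkhornPotential C α f then h.choose else fun _ => 0

/-- The extrapolation `f^E = -T(-(f - Ω_C^*(f)·1), g-softmax(f)) + Ω_C^*(f)·1`. -/
def extrap {d : ℕ} (C : Matrix (Fin d) (Fin d) ℝ) (f : Fin d → ℝ) : Fin d → ℝ :=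
  fun i => -(Tsoft C (fun j => -(f j - OmegaStar C f)) (gsoftmax C f) i) + OmegaStar C f

/-- The kernel matrix `K = (exp(-c_{ij}/2))_{ij}`. -/
def kernelK {d : ℕ} (C : Matrix (Fin d) (Fin d) ℝ) : Matrix (Fin d) (Fin d) ℝ :=
  Matrix.of fun i j => Real.exp (-(C i j) / 2)

section helpers
variable {d : ℕ} (C : Matrix (Fin d) (Fin d) ℝ)

lemma quad_expand (K : Fin d → Fin d → ℝ) (u w : Fin d → ℝ) (s t : ℝ) :
    ∑ k, ∑ l, (s * u k + t * w k) * (s * u l + t * w l) * K k l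
    = s^2 * (∑ k, ∑ l, u k * u l * K k l) + (s*t) * (∑ k, ∑ l, u k * w l * K k l)
      + (t*s) * (∑ k, ∑ l, w k * u l * K k l) + t^2 * (∑ k, ∑ l, w k * w l * K k l) := by
  rw [Finset.mul_sum, Finset.mul_sum, Finset.mul_sum, Finset.mul_sum,
    ← Finset.sum_add_distrib, ← Finset.sum_add_distrib, ← Finset.sum_add_distrib]
  refine Finset.sum_congr rfl fun k _ => ?_
  rw [Finset.mul_sum, Finset.mul_sum, Finset.mul_sum, Finset.mul_sum,
    ← Finset.sum_add_distrib, ← Finset.sum_add_distrib, ← Finset.sum_add_distrib]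
  refine Finset.sum_congr rfl fun l _ => ?_
  ring

lemma quad_sub (K : Fin d → Fin d → ℝ) (u v : Fin d → ℝ) :
    ∑ k, ∑ l, (u k - v k) * (u l - v l) * K k l
    = (∑ k, ∑ l, u k * u l * K k l) - (∑ k, ∑ l, u k * v l * K k l)
      - (∑ k, ∑ l, v k * u l * K k l) + ∑ k, ∑ l, v k * v l * K k l := by
  have h := quad_expand K u v 1 (-1)
  simp only [one_mul, neg_one_mul] at h
  calc ∑ k, ∑ l, (u k - v k) * (u l - v l) * K k l
      = ∑ k, ∑ l, (1 * u k + (-1) * v k) * (1 * u l + (-1) * v l) * K k l := by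
        refine Finset.sum_congr rfl fun k _ => Finset.sum_congr rfl fun l _ => by ring
    _ = _ := by rw [quad_expand]; ring

/-- `Phi` as a quadratic form in the kernel. -/
lemma phi_quad (β g : Fin d → ℝ) :
    Phi C β g = ∑ i, ∑ j, (β i * Real.exp (-(g i)/2)) * (β j * Real.exp (-(g j)/2))
      * Real.exp (-(C i j)/2) := by
  refine Finset.sum_congr rfl fun i _ => Finset.sum_congr rfl fun j _ => ?_
  rw [show -(g i + g j + C i j) / 2 = -(g i)/2 + (-(g j)/2 + -(C i j)/2) by ring,
    Real.exp_add, Real.exp_add]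
  ring

lemma dot_eq (x y : Fin d → ℝ) : dotProduct x ((kernelK C).mulVec y)
    = ∑ i, ∑ j, x i * y j * Real.exp (-(C i j)/2) := by
  simp only [dotProduct, Matrix.mulVec, kernelK, Matrix.of_apply, Finset.mul_sum]
  exact Finset.sum_congr rfl fun i _ => Finset.sum_congr rfl fun j _ => by ring

lemma quad_pos (hK : (kernelK C).PosDef) {x : Fin d → ℝ} (hx : x ≠ 0) :
    0 < ∑ i, ∑ j, x i * x j * Real.exp (-(C i j)/2) := by
  have := (Matrix.posDef_iff_dotProduct_mulVec.1 hK).2 hx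
  rw [star_trivial, dot_eq] at this
  exact this

lemma quad_nonneg (hK : (kernelK C).PosDef) (x : Fin d → ℝ) :
    0 ≤ ∑ i, ∑ j, x i * x j * Real.exp (-(C i j)/2) := by
  rcases eq_or_ne x 0 with rfl | hx
  · simp
  · exact (quad_pos C hK hx).le

lemma phi_continuous (g : Fin d → ℝ) : Continuous (fun β : Fin d → ℝ => Phi C β g) := by
  refine continuous_finset_sum _ fun i _ => continuous_finset_sum _ fun j _ => ?_
  exact ((continuous_apply i).mul (continuous_apply j)).mul continuous_const

lemma exists_min (hd : 1 ≤ d) (g : Fin d → ℝ) :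
    ∃ α ∈ simplexS d, IsMinOn (fun β => Phi C β g) (simplexS d) α := by
  have hne : (stdSimplex ℝ (Fin d)).Nonempty :=
    ⟨fun k => if k = ⟨0, hd⟩ then 1 else 0, fun k => by positivity, by simp [Finset.sum_ite_eq']⟩
  exact (isCompact_stdSimplex ℝ (Fin d)).exists_isMinOn hne (phi_continuous C g).continuousOn

lemma sInf_image_eq {g α : Fin d → ℝ} (hα : α ∈ simplexS d)
    (hmin : IsMinOn (fun β => Phi C β g) (simplexS d) α) :
    sInf ((fun β => Phi C β g) '' simplexS d) = Phi C α g := by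
  refine le_antisymm (csInf_le ⟨Phi C α g, ?_⟩ ⟨α, hα, rfl⟩) (le_csInf ⟨_, α, hα, rfl⟩ ?_)
  · rintro y ⟨β, hβ, rfl⟩; exact hmin hβ
  · rintro y ⟨β, hβ, rfl⟩; exact hmin hβ

/-- KKT: at a minimizer, every "partial" `B i` is at least the minimum value. -/
lemma kkt_ge (hCsym : C.IsSymm) {g α : Fin d → ℝ} (hα : α ∈ simplexS d)
    (hmin : IsMinOn (fun β => Phi C β g) (simplexS d) α) (i : Fin d) :
    Phi C α g ≤ ∑ j, α j * Real.exp (-(g i + g j + C i j) / 2) := by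
  set A : Fin d → Fin d → ℝ := fun k l => Real.exp (-(g k + g l + C k l) / 2) with hA
  have hAsym : ∀ k l, A k l = A l k := fun k l => by
    simp only [hA]; rw [show C k l = C l k from (hCsym.apply k l).symm]; ring_nf
  set m := Phi C α g with hm
  set B := ∑ j, α j * A i j with hB
  set w : Fin d → ℝ := fun k => if k = i then 1 else 0 with hw
  by_contra hcon
  push_neg at hcon
  -- value of Phi on the segment
  have hval : ∀ t : ℝ, Phi C (fun k => (1-t) * α k + t * w k) g
      = (1-t)^2 * m + 2*(t*(1-t)) * B + t^2 * A i i := by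
    intro t
    have h1 : ∑ k, ∑ l, α k * w l * A k l = B := by
      rw [show B = ∑ k, α k * A k i from by
        rw [hB]; exact Finset.sum_congr rfl fun k _ => by rw [hAsym i k]]
      refine Finset.sum_congr rfl fun k _ => ?_
      simp [hw, mul_ite, ite_mul, Finset.sum_ite_eq']
    have h2 : ∑ k, ∑ l, w k * α l * A k l = B := by
      rw [hB]
      rw [Finset.sum_comm]
      refine Finset.sum_congr rfl fun l _ => ?_
      simp [hw, mul_ite, ite_mul, Finset.sum_ite_eq]
    have h3 : ∑ k, ∑ l, w k * w l * A k l = A i i := by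
      simp [hw, mul_ite, ite_mul, Finset.sum_ite_eq', Finset.sum_ite_eq]
    have hPhiA : (∑ k, ∑ l, α k * α l * A k l) = m := rfl
    calc Phi C (fun k => (1-t) * α k + t * w k) g
        = ∑ k, ∑ l, ((1-t) * α k + t * w k) * ((1-t) * α l + t * w l) * A k l := rfl
      _ = _ := by rw [quad_expand, h1, h2, h3, hPhiA]; ring
  -- membership in the simplex
  have hmem : ∀ t : ℝ, 0 ≤ t → t ≤ 1 → (fun k => (1-t) * α k + t * w k) ∈ simplexS d := by
    intro t ht0 ht1
    refine ⟨fun k => add_nonneg (mul_nonneg (by linarith) (hα.1 k))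
      (mul_nonneg ht0 (by simp only [hw]; split <;> norm_num)), ?_⟩
    rw [Finset.sum_add_distrib, ← Finset.mul_sum, ← Finset.mul_sum, hα.2]
    simp [hw, Finset.sum_ite_eq']
  -- derive contradiction
  have key : ∀ t : ℝ, 0 < t → t ≤ 1 → 0 ≤ 2*(B - m) + t * (m - 2*B + A i i) := by
    intro t ht0 ht1
    have h := hmin (hmem t ht0.le ht1)
    simp only [Set.mem_setOf_eq] at h
    rw [hval t] at h
    have h2 : 0 ≤ 2*t*(B - m) + t^2 * (m - 2*B + A i i) := by nlinarith
    nlinarith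
  set q := m - 2*B + A i i with hq
  rcases le_or_gt q 0 with hq0 | hq0
  · have := key 1 one_pos le_rfl
    nlinarith
  · have hmB : 0 < m - B := by linarith
    have ht : 0 < min 1 ((m - B)/q) := lt_min one_pos (div_pos hmB hq0)
    have hk := key _ ht (min_le_left _ _)
    have h2 : min 1 ((m - B)/q) * q ≤ m - B := by
      calc min 1 ((m - B)/q) * q ≤ ((m - B)/q) * q :=
            mul_le_mul_of_nonneg_right (min_le_right _ _) hq0.le
        _ = m - B := div_mul_cancel₀ _ (ne_of_gt hq0)
    nlinarith

/-- KKT complementarity: `α i * B i = α i * m`. -/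
lemma kkt_eq (hCsym : C.IsSymm) {g α : Fin d → ℝ} (hα : α ∈ simplexS d)
    (hmin : IsMinOn (fun β => Phi C β g) (simplexS d) α) (i : Fin d) :
    α i * (∑ j, α j * Real.exp (-(g i + g j + C i j) / 2)) = α i * Phi C α g := by
  have h1 : ∑ k, α k * (∑ j, α j * Real.exp (-(g k + g j + C k j) / 2)) = Phi C α g := by
    rw [Phi]
    refine Finset.sum_congr rfl fun k _ => ?_
    rw [Finset.mul_sum]
    exact Finset.sum_congr rfl fun j _ => by ring
  have h2 : ∑ k, α k * Phi C α g = Phi C α g := by rw [← Finset.sum_mul, hα.2, one_mul]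
  have hsum : ∑ k, α k * ((∑ j, α j * Real.exp (-(g k + g j + C k j) / 2)) - Phi C α g) = 0 := by
    simp only [mul_sub, Finset.sum_sub_distrib, h1, h2, sub_self]
  have hnn : ∀ k ∈ Finset.univ, 0 ≤ α k * ((∑ j, α j * Real.exp (-(g k + g j + C k j) / 2)) - Phi C α g) :=
    fun k _ => mul_nonneg (hα.1 k) (sub_nonneg.2 (kkt_ge C hCsym hα hmin k))
  have h3 := (Finset.sum_eq_zero_iff_of_nonneg hnn).1 hsum i (Finset.mem_univ i)
  nlinarith [h3]

end helpers


section main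
variable {d : ℕ} (C : Matrix (Fin d) (Fin d) ℝ)

lemma gsoftmax_spec (hd : 1 ≤ d) (g : Fin d → ℝ) :
    gsoftmax C g ∈ simplexS d ∧ IsMinOn (fun β => Phi C β g) (simplexS d) (gsoftmax C g) := by
  rw [gsoftmax, dif_pos (exists_min C hd g)]
  exact (exists_min C hd g).choose_spec

lemma extrap_formula (h a : Fin d → ℝ) (hgs : gsoftmax C h = a) (S : Fin d → ℝ)
    (hsum : ∀ i, ∑ j, a j * Real.exp (-(h j + C i j)/2) = S i) (hS : ∀ i, 0 < S i) :
    ∀ i, extrap C h i = 2 * OmegaStar C h + 2 * Real.log (S i) := by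
  intro i
  simp only [extrap, Tsoft, hgs]
  have h1 : ∀ j, Real.exp ((-(h j - OmegaStar C h) - C i j)/2)
      = Real.exp (OmegaStar C h / 2) * Real.exp (-(h j + C i j)/2) := by
    intro j; rw [← Real.exp_add]; congr 1; ring
  have h2 : ∑ j, a j * Real.exp ((-(h j - OmegaStar C h) - C i j)/2)
      = Real.exp (OmegaStar C h / 2) * S i := by
    rw [← hsum i, Finset.mul_sum]
    exact Finset.sum_congr rfl fun j _ => by rw [h1 j]; ring
  rw [h2, Real.log_mul (Real.exp_ne_zero _) (ne_of_gt (hS i)), Real.log_exp]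
  ring

end main

/-- Properties of the extrapolated potential, part (ii): `(f^E)^E = f^E`,
`Ω_C^*(f^E) = Ω_C^*(f)` and `g-softmax(f^E) = g-softmax(f)`. -/
theorem extrap_idempotent_invariants (d : ℕ) (hd : 1 ≤ d)
    (C : Matrix (Fin d) (Fin d) ℝ) (hCsym : C.IsSymm) (hCdiag : ∀ i, C i i = 0)
    (hK : (kernelK C).PosDef) (f : Fin d → ℝ) :
    extrap C (extrap C f) = extrap C f ∧
    OmegaStar C (extrap C f) = OmegaStar C f ∧
    gsoftmax C (extrap C f) = gsoftmax C f := by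
  obtain ⟨hαS, hαmin⟩ := gsoftmax_spec C hd f
  set α := gsoftmax C f with hαdef
  set m := Phi C α f with hmdef
  -- α has a nonzero coordinate
  have hαne : ∃ k, 0 < α k := by
    by_contra hc; push_neg at hc
    have h1 : ∀ k, α k = 0 := fun k => le_antisymm (hc k) (hαS.1 k)
    have := hαS.2; simp [h1] at this
  -- positivity of m
  have hxne : (fun i => α i * Real.exp (-(f i)/2)) ≠ 0 := by
    obtain ⟨k, hk⟩ := hαne
    intro h0
    have := congrFun h0 k
    simp only [Pi.zero_apply, mul_eq_zero] at this
    rcases this with h | h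
    · exact absurd h (ne_of_gt hk)
    · exact absurd h (Real.exp_ne_zero _)
  have hm : 0 < m := by rw [hmdef, phi_quad]; exact quad_pos C hK hxne
  have hΩ : OmegaStar C f = -Real.log m := by
    rw [OmegaStar, sInf_image_eq C hαS hαmin]
  set S : Fin d → ℝ := fun i => ∑ j, α j * Real.exp (-(f j + C i j)/2) with hSdef
  have hS : ∀ i, 0 < S i := by
    intro i
    obtain ⟨k, hk⟩ := hαne
    refine Finset.sum_pos' (fun j _ => mul_nonneg (hαS.1 j) (Real.exp_pos _).le)
      ⟨k, Finset.mem_univ k, mul_pos hk (Real.exp_pos _)⟩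
  -- B i = exp(-(f i)/2) * S i
  have hB : ∀ i, ∑ j, α j * Real.exp (-(f i + f j + C i j)/2)
      = Real.exp (-(f i)/2) * S i := by
    intro i
    rw [hSdef]; rw [Finset.mul_sum]
    refine Finset.sum_congr rfl fun j _ => ?_
    rw [show -(f i + f j + C i j)/2 = -(f i)/2 + -(f j + C i j)/2 by ring, Real.exp_add]
    ring
  -- KKT consequence: α i * exp(-(f i)/2) = α i * (m / S i)
  have hxS : ∀ i, α i * Real.exp (-(f i)/2) = α i * (m / S i) := by
    intro i
    have h := kkt_eq C hCsym hαS hαmin i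
    rw [hB i] at h
    rw [eq_comm, mul_div_assoc', div_eq_iff (ne_of_gt (hS i))]
    linear_combination -h
  -- kernel identity
  have hKey : ∀ i, ∑ j, (α j * Real.exp (-(f j)/2)) * Real.exp (-(C i j)/2) = S i := by
    intro i
    rw [hSdef]
    refine Finset.sum_congr rfl fun j _ => ?_
    rw [mul_assoc, ← Real.exp_add]
    congr 2
    ring
  -- symmetric cross sums
  have hsymK : ∀ u v : Fin d → ℝ, ∑ i, ∑ j, u i * v j * Real.exp (-(C i j)/2)
      = ∑ i, ∑ j, v i * u j * Real.exp (-(C i j)/2) := by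
    intro u v
    rw [Finset.sum_comm]
    refine Finset.sum_congr rfl fun j _ => Finset.sum_congr rfl fun i _ => ?_
    rw [show C i j = C j i from (hCsym.apply j i).symm ▸ rfl]
    ring
  -- extrapolation formula for f
  have hEf : ∀ i, extrap C f i = 2 * OmegaStar C f + 2 * Real.log (S i) :=
    extrap_formula C f α hαdef.symm S (fun i => rfl) hS
  set fE := extrap C f with hfEdef
  have hEexp : ∀ i, Real.exp (-(fE i)/2) = m / S i := by
    intro i
    rw [hEf i, hΩ, show -(2 * -Real.log m + 2 * Real.log (S i))/2
        = Real.log m + -Real.log (S i) by ring,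
      Real.exp_add, Real.exp_log hm, Real.exp_neg, Real.exp_log (hS i), div_eq_mul_inv]
  have hPhiE : ∀ γ : Fin d → ℝ, Phi C γ fE
      = ∑ i, ∑ j, (γ i * (m / S i)) * (γ j * (m / S j)) * Real.exp (-(C i j)/2) := by
    intro γ
    rw [phi_quad]
    exact Finset.sum_congr rfl fun i _ => Finset.sum_congr rfl fun j _ => by
      rw [hEexp i, hEexp j]
  have hcross : ∀ γ : Fin d → ℝ, (∑ k, γ k = 1) →
      ∑ i, ∑ j, (γ i * (m / S i)) * (α j * Real.exp (-(f j)/2)) * Real.exp (-(C i j)/2)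
        = m := by
    intro γ hγ1
    have h1 : ∀ i, ∑ j, (γ i * (m / S i)) * (α j * Real.exp (-(f j)/2)) * Real.exp (-(C i j)/2)
        = γ i * m := by
      intro i
      have h2 : ∑ j, (γ i * (m / S i)) * (α j * Real.exp (-(f j)/2)) * Real.exp (-(C i j)/2)
          = (γ i * (m / S i)) * ∑ j, (α j * Real.exp (-(f j)/2)) * Real.exp (-(C i j)/2) := by
        rw [Finset.mul_sum]; exact Finset.sum_congr rfl fun j _ => by ring
      rw [h2, hKey i, mul_assoc, div_mul_cancel₀ m (ne_of_gt (hS i))]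
    rw [Finset.sum_congr rfl fun i _ => h1 i, ← Finset.sum_mul, hγ1, one_mul]
  have hxx : ∑ i, ∑ j, (α i * Real.exp (-(f i)/2)) * (α j * Real.exp (-(f j)/2))
      * Real.exp (-(C i j)/2) = m := by
    rw [← phi_quad]
  have hPhiαE : Phi C α fE = m := by
    have e1 : ∑ i, ∑ j, (α i * (m / S i)) * (α j * (m / S j)) * Real.exp (-(C i j)/2)
        = ∑ i, ∑ j, (α i * Real.exp (-(f i)/2)) * (α j * Real.exp (-(f j)/2))
          * Real.exp (-(C i j)/2) :=
      Finset.sum_congr rfl fun i _ => Finset.sum_congr rfl fun j _ => by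
        rw [← hxS i, ← hxS j]
    rw [hPhiE α, e1, hxx]
  have hminE : IsMinOn (fun γ => Phi C γ fE) (simplexS d) α := by
    refine isMinOn_iff.2 fun γ hγ => ?_
    show Phi C α fE ≤ Phi C γ fE
    have hq := quad_sub (K := fun i j => Real.exp (-(C i j)/2))
      (fun i => γ i * (m / S i)) (fun i => α i * Real.exp (-(f i)/2))
    have hnn := quad_nonneg C hK (fun i => γ i * (m / S i) - α i * Real.exp (-(f i)/2))
    rw [hq] at hnn
    have hc1 := hcross γ hγ.2
    have hc2 : ∑ i, ∑ j, (α i * Real.exp (-(f i)/2)) * (γ j * (m / S j))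
        * Real.exp (-(C i j)/2) = m := by
      rw [hsymK]; exact hcross γ hγ.2
    rw [hPhiαE, hPhiE γ]
    linarith
  have hΩE : OmegaStar C fE = -Real.log m := by
    rw [OmegaStar, sInf_image_eq C hαS hminE, hPhiαE]
  obtain ⟨hβS, hβmin⟩ := gsoftmax_spec C hd fE
  have hβval : Phi C (gsoftmax C fE) fE = m := by
    refine le_antisymm ?_ ?_
    · have h := isMinOn_iff.1 hβmin α hαS
      rw [hPhiαE] at h; exact h
    · have h := isMinOn_iff.1 hminE _ hβS
      rw [hPhiαE] at h; exact h
  have hgsE : gsoftmax C fE = α := by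
    set β := gsoftmax C fE with hβdef
    by_contra hne
    have hyx : (fun i => β i * (m / S i) - α i * Real.exp (-(f i)/2)) ≠ 0 := by
      intro h0
      apply hne
      funext i
      have h := congrFun h0 i
      simp only [Pi.zero_apply, sub_eq_zero] at h
      rw [hxS i] at h
      exact mul_right_cancel₀ (ne_of_gt (div_pos hm (hS i))) h
    have hpos := quad_pos C hK hyx
    have hq := quad_sub (K := fun i j => Real.exp (-(C i j)/2))
      (fun i => β i * (m / S i)) (fun i => α i * Real.exp (-(f i)/2))
    rw [hq] at hpos
    have h1 : ∑ i, ∑ j, (β i * (m / S i)) * (β j * (m / S j)) * Real.exp (-(C i j)/2) = m := by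
      rw [← hPhiE β]; exact hβval
    have h2 := hcross β hβS.2
    have h3 : ∑ i, ∑ j, (α i * Real.exp (-(f i)/2)) * (β j * (m / S j))
        * Real.exp (-(C i j)/2) = m := by
      rw [hsymK]; exact hcross β hβS.2
    linarith
  have hsumE : ∀ i, ∑ j, α j * Real.exp (-(fE j + C i j)/2) = S i := by
    intro i
    rw [← hKey i]
    refine Finset.sum_congr rfl fun j _ => ?_
    rw [show -(fE j + C i j)/2 = -(fE j)/2 + -(C i j)/2 by ring, Real.exp_add, hEexp j]
    linear_combination (-Real.exp (-(C i j)/2)) * hxS j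
  have hEfE : ∀ i, extrap C fE i = 2 * OmegaStar C fE + 2 * Real.log (S i) :=
    extrap_formula C fE α hgsE S hsumE hS
  refine ⟨?_, ?_, ?_⟩
  · funext i
    rw [hEfE i, hΩE, ← hΩ]
    exact (hEf i).symm
  · rw [hΩE, hΩ]
  · exact hgsE
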